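/- Let A : ℝ → ℂⁿˣⁿ, x : ℝ → ℂⁿ and b : ℝ → ℂⁿ be differentiable at t, suppose A(t) is invertible, and let η ∈ ℝ. Define the error function e(s) = A(s)·x(s) − b(s). Then e′(t) = −η·e(t) holds if and only if x′(t) = A(t)⁻¹·( −A′(t)·x(t) + b′(t) + η·b(t) ) − η·x(t). -/

import Mathlib

open Matrix

lemma mulVec_eq_iff {n : ℕ} {A : Matrix (Fin n) (Fin n) ℂ} (h : IsUnit A)
    (v w : Fin n → ℂ) : A *ᵥ v = w ↔ v = A⁻¹ *ᵥ w := by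
  have hd : IsUnit A.det := (Matrix.isUnit_iff_isUnit_det A).mp h
  constructor
  · rintro rfl
    rw [Matrix.mulVec_mulVec, Matrix.nonsing_inv_mul _ hd, Matrix.one_mulVec]
  · rintro rfl
    rw [Matrix.mulVec_mulVec, Matrix.mul_nonsing_inv _ hd, Matrix.one_mulVec]

theorem znn_time_varying_linear_equations
    {n : ℕ} (t η : ℝ)
    (A : ℝ → Matrix (Fin n) (Fin n) ℂ) (x b : ℝ → (Fin n → ℂ))
    (A' : Matrix (Fin n) (Fin n) ℂ) (x' b' : Fin n → ℂ)
    (hA : ∀ i j : Fin n, HasDerivAt (fun s => A s i j) (A' i j) t)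
    (hx : ∀ i : Fin n, HasDerivAt (fun s => x s i) (x' i) t)
    (hb : ∀ i : Fin n, HasDerivAt (fun s => b s i) (b' i) t)
    (hinv : IsUnit (A t))
    (e : ℝ → (Fin n → ℂ)) (he : ∀ s, e s = A s *ᵥ x s - b s) :
    (∀ i : Fin n, HasDerivAt (fun s => e s i) (-(η : ℂ) * e t i) t) ↔
      x' = (A t)⁻¹ *ᵥ (-(A' *ᵥ x t) + b' + (η : ℂ) • b t) - (η : ℂ) • x t := by
  set E' : Fin n → ℂ := A' *ᵥ x t + A t *ᵥ x' - b' with hE'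
  have hE : ∀ i : Fin n, HasDerivAt (fun s => e s i) (E' i) t := by
    intro i
    have h1 : HasDerivAt (fun s => (∑ j, A s i j * x s j) - b s i)
        ((∑ j, (A' i j * x t j + A t i j * x' j)) - b' i) t :=
      (HasDerivAt.fun_sum fun j _ => (hA i j).mul (hx j)).sub (hb i)
    have h2 : (fun s => e s i) = fun s => (∑ j, A s i j * x s j) - b s i := by
      funext s
      simp [he s, Matrix.mulVec, dotProduct]
    rw [h2]
    convert h1 using 1
    simp [hE', Matrix.mulVec, dotProduct, Finset.sum_add_distrib]
  have key : (∀ i : Fin n, HasDerivAt (fun s => e s i) (-(η : ℂ) * e t i) t) ↔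
      (fun i => -(η : ℂ) * e t i) = E' := by
    constructor
    · intro h
      funext i
      exact (h i).unique (hE i)
    · intro h i
      rw [show -(η:ℂ) * e t i = E' i from congrFun h i]
      exact hE i
  rw [key]
  have hAx : A t *ᵥ ((A t)⁻¹ *ᵥ (-(A' *ᵥ x t) + b' + (η : ℂ) • b t)) =
      -(A' *ᵥ x t) + b' + (η : ℂ) • b t := by
    rw [Matrix.mulVec_mulVec, Matrix.mul_nonsing_inv _ ((Matrix.isUnit_iff_isUnit_det _).mp hinv), Matrix.one_mulVec]
  constructor
  · intro h
    have h2 : A t *ᵥ x' = -(A' *ᵥ x t) + b' + (η : ℂ) • b t - (η : ℂ) • (A t *ᵥ x t) := by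
      have := congrFun h
      funext i
      have hi := this i
      simp only [hE', he t, Pi.sub_apply, Pi.add_apply, Pi.neg_apply, Pi.smul_apply,
        smul_eq_mul] at hi ⊢
      linear_combination -hi
    rw [mulVec_eq_iff hinv] at h2
    rw [h2]
    rw [Matrix.mulVec_sub, Matrix.mulVec_smul, Matrix.mulVec_mulVec,
      Matrix.nonsing_inv_mul _ ((Matrix.isUnit_iff_isUnit_det _).mp hinv), Matrix.one_mulVec]
  · intro h
    funext i
    subst h
    simp only [hE', he t, Matrix.mulVec_sub, Matrix.mulVec_smul, hAx, Pi.sub_apply,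
      Pi.add_apply, Pi.neg_apply, Pi.smul_apply, smul_eq_mul]
    ring
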